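/- For N = 4 and parameters p_0,p_1,p_2 ∈ (0,1) with q_m = 1 − p_m, the lumped game-B transition matrix on the six dihedral orbit classes (ordered {0000}, {0001,…}, {0011,0110,1001,1100}, {0101,1010}, {0111,…}, {1111}) equals (1/4) times the matrix with rows (4q_0, 4p_0, 0, 0, 0, 0), (q_0, p_0+q_0+2q_1, 2p_1, p_0, 0, 0), (0, 2q_1, 2(p_1+q_1), 0, 2p_1, 0), (0, 2q_0, 0, 2(p_0+q_2), 2p_2, 0), (0, 0, 2q_1, q_2, 2p_1+p_2+q_2, p_2), (0, 0, 0, 0, 4q_2, 4p_2). -/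

import Mathlib

open Finset

/-- `m_i(x) = x_{i-1} + x_{i+1}` (cyclic indices). -/
def nbrWinners (x : ZMod 4 → Bool) (i : ZMod 4) : ℕ :=
  (if x (i - 1) then 1 else 0) + (if x (i + 1) then 1 else 0)

/-- The game-B transition matrix on `{0,1}^4`: a player `i` is chosen with probability
`1/4`; if `x_i = 0` he flips to `1` with probability `p_{m_i(x)}`, and if `x_i = 1` he
flips to `0` with probability `q_{m_i(x)} = 1 - p_{m_i(x)}`; otherwise the state is
unchanged. -/
noncomputable def gameB4 (p : ℕ → ℝ) (x y : ZMod 4 → Bool) : ℝ :=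
  (1 / 4) * ∑ i : ZMod 4,
      (if y = Function.update x i (!x i) then
        (if x i then 1 - p (nbrWinners x i) else p (nbrWinners x i)) else 0)
    + (if y = x then
        (1 / 4) * ∑ i : ZMod 4,
          (if x i then p (nbrWinners x i) else 1 - p (nbrWinners x i))
      else 0)

/-- The state `(x_1, x_2, x_3, x_4) ∈ {0,1}^4` (player 4 corresponding to `0 ∈ ZMod 4`). -/
def st (a b c d : Bool) : ZMod 4 → Bool :=
  fun i => if i = 1 then a else if i = 2 then b else if i = 3 then c else d

/-- The dihedral group of order 8 acting on the circle `ZMod 4`. -/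
def dihedral4 : Subgroup (Equiv.Perm (ZMod 4)) :=
  Subgroup.closure {Equiv.addLeft 1, (Equiv.neg (ZMod 4)).trans (Equiv.addLeft 1)}

/-- Representatives of the six dihedral orbit classes, ordered as
`{0000}`, `{0001,…}`, `{0011,0110,1001,1100}`, `{0101,1010}`, `{0111,…}`, `{1111}`. -/
def reps : Fin 6 → (ZMod 4 → Bool) :=
  ![st false false false false, st false false false true, st false false true true,
    st false true false true, st false true true true, st true true true true]

/-- Number of ones of a state. -/
def ones (x : ZMod 4 → Bool) : ℕ :=
  (if x 0 then 1 else 0) + (if x 1 then 1 else 0) + (if x 2 then 1 else 0) + (if x 3 then 1 else 0)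

/-- Classification of a state into its dihedral orbit class. -/
def cls (x : ZMod 4 → Bool) : Fin 6 :=
  if ones x = 0 then 0 else if ones x = 1 then 1 else
  if ones x = 2 then (if x 0 = x 2 then 3 else 2) else
  if ones x = 3 then 4 else 5

lemma cls_comp {σ : Equiv.Perm (ZMod 4)} (hσ : σ ∈ dihedral4) (x : ZMod 4 → Bool) :
    cls (x ∘ σ) = cls x := by
  induction hσ using Subgroup.closure_induction generalizing x with
  | mem g hg =>
      rcases hg with hg | hg
      · subst hg; revert x; decide
      · subst hg; revert x; decide
  | one => rfl
  | mul g h _ _ hg hh =>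
      have : x ∘ ⇑(g * h) = (x ∘ ⇑g) ∘ ⇑h := rfl
      rw [this, hh, hg]
  | inv g hg ih =>
      have h2 : (x ∘ ⇑g⁻¹) ∘ ⇑g = x := by
        funext a; simp [Function.comp, Equiv.Perm.coe_inv]
      calc cls (x ∘ ⇑g⁻¹) = cls ((x ∘ ⇑g⁻¹) ∘ ⇑g) := (ih _).symm
        _ = cls x := by rw [h2]

/-- The eight elements of the dihedral group. -/
def perms : Fin 8 → Equiv.Perm (ZMod 4) :=
  ![1, Equiv.addLeft 1, Equiv.addLeft 1 * Equiv.addLeft 1,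
    Equiv.addLeft 1 * Equiv.addLeft 1 * Equiv.addLeft 1,
    (Equiv.neg (ZMod 4)).trans (Equiv.addLeft 1),
    Equiv.addLeft 1 * ((Equiv.neg (ZMod 4)).trans (Equiv.addLeft 1)),
    Equiv.addLeft 1 * Equiv.addLeft 1 * ((Equiv.neg (ZMod 4)).trans (Equiv.addLeft 1)),
    Equiv.addLeft 1 * Equiv.addLeft 1 * Equiv.addLeft 1 *
      ((Equiv.neg (ZMod 4)).trans (Equiv.addLeft 1))]

lemma perms_mem (j : Fin 8) : perms j ∈ dihedral4 := by
  have hr : Equiv.addLeft (1 : ZMod 4) ∈ dihedral4 := Subgroup.subset_closure (by left; rfl)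
  have hs : (Equiv.neg (ZMod 4)).trans (Equiv.addLeft 1) ∈ dihedral4 :=
    Subgroup.subset_closure (by right; rfl)
  fin_cases j
  · exact one_mem _
  · exact hr
  · exact mul_mem hr hr
  · exact mul_mem (mul_mem hr hr) hr
  · exact hs
  · exact mul_mem hr hs
  · exact mul_mem (mul_mem hr hr) hs
  · exact mul_mem (mul_mem (mul_mem hr hr) hr) hs

lemma trans_aux : ∀ x : ZMod 4 → Bool, ∃ j : Fin 8, x = reps (cls x) ∘ ⇑(perms j) := by decide

lemma orbit_iff (l : Fin 6) (y : ZMod 4 → Bool) :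
    (∃ σ ∈ dihedral4, y = reps l ∘ σ) ↔ cls y = l := by
  constructor
  · rintro ⟨σ, hσ, rfl⟩
    rw [cls_comp hσ]
    revert l; decide
  · intro h
    obtain ⟨j, hj⟩ := trans_aux y
    exact ⟨perms j, perms_mem j, by rw [← h]; exact hj⟩

lemma sum_zmod4 (f : ZMod 4 → ℝ) : ∑ i : ZMod 4, f i = f 0 + f 1 + f 2 + f 3 := by
  rw [show (univ : Finset (ZMod 4)) = {0, 1, 2, 3} from rfl]
  rw [Finset.sum_insert (by decide), Finset.sum_insert (by decide),
    Finset.sum_insert (by decide), Finset.sum_singleton]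
  ring

/-- Identification of states with quadruples of booleans. -/
def stEquiv : Bool × Bool × Bool × Bool ≃ (ZMod 4 → Bool) where
  toFun t := st t.1 t.2.1 t.2.2.1 t.2.2.2
  invFun x := (x 1, x 2, x 3, x 0)
  left_inv t := by obtain ⟨a, b, c, d⟩ := t; rfl
  right_inv x := by funext i; fin_cases i <;> rfl

lemma sum_states (f : (ZMod 4 → Bool) → ℝ) :
    ∑ y : ZMod 4 → Bool, f y =
      ∑ t : Bool × Bool × Bool × Bool, f (st t.1 t.2.1 t.2.2.1 t.2.2.2) :=
  (Equiv.sum_comp stEquiv f).symm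

set_option maxHeartbeats 4000000 in
open scoped Classical in
/-- For `N = 4` and `p_0,p_1,p_2 ∈ (0,1)` with `q_m = 1 - p_m`, the lumped game-B
transition matrix on the six dihedral orbit classes equals `(1/4)` times the matrix with
rows `(4q_0, 4p_0, 0, 0, 0, 0)`, `(q_0, p_0+q_0+2q_1, 2p_1, p_0, 0, 0)`,
`(0, 2q_1, 2(p_1+q_1), 0, 2p_1, 0)`, `(0, 2q_0, 0, 2(p_0+q_2), 2p_2, 0)`,
`(0, 0, 2q_1, q_2, 2p_1+p_2+q_2, p_2)`, `(0, 0, 0, 0, 4q_2, 4p_2)`. -/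
theorem stmt19 (p0 p1 p2 : ℝ) (h0 : 0 < p0 ∧ p0 < 1) (h1 : 0 < p1 ∧ p1 < 1)
    (h2 : 0 < p2 ∧ p2 < 1) :
    let p : ℕ → ℝ := fun m => if m = 0 then p0 else if m = 1 then p1 else p2
    let q0 : ℝ := 1 - p0
    let q1 : ℝ := 1 - p1
    let q2 : ℝ := 1 - p2
    ∀ (k l : Fin 6) (x : ZMod 4 → Bool), (∃ σ ∈ dihedral4, x = reps k ∘ σ) →
      ∑ y ∈ Finset.univ.filter (fun y => ∃ σ ∈ dihedral4, y = reps l ∘ σ),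
        gameB4 p x y =
      (1 / 4) *
        ![![4 * q0, 4 * p0, 0, 0, 0, 0],
          ![q0, p0 + q0 + 2 * q1, 2 * p1, p0, 0, 0],
          ![0, 2 * q1, 2 * (p1 + q1), 0, 2 * p1, 0],
          ![0, 2 * q0, 0, 2 * (p0 + q2), 2 * p2, 0],
          ![0, 0, 2 * q1, q2, 2 * p1 + p2 + q2, p2],
          ![0, 0, 0, 0, 4 * q2, 4 * p2]] k l := by
  intro p q0 q1 q2 k l x hx
  have hp0 : p 0 = p0 := rfl
  have hp1 : p 1 = p1 := rfl
  have hp2 : p 2 = p2 := rfl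
  have hq0 : q0 = 1 - p0 := rfl
  have hq1 : q1 = 1 - p1 := rfl
  have hq2 : q2 = 1 - p2 := rfl
  have hk : cls x = k := (orbit_iff k x).mp hx
  have hfil : Finset.univ.filter (fun y => ∃ σ ∈ dihedral4, y = reps l ∘ σ)
      = Finset.univ.filter (fun y => cls y = l) := by
    ext y
    simp only [Finset.mem_filter, Finset.mem_univ, true_and]
    exact orbit_iff l y
  rw [hfil, Finset.sum_filter, sum_states]
  obtain ⟨a, b, c, d, rfl⟩ : ∃ a b c d, x = st a b c d :=
    ⟨x 1, x 2, x 3, x 0, (stEquiv.right_inv x).symm⟩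
  fin_cases k <;> cases a <;> cases b <;> cases c <;> cases d <;>
  first
    | exact absurd hk (by decide)
    | (fin_cases l <;>
      · simp (config := { decide := true }) only [gameB4, sum_zmod4, nbrWinners, st,
          Fintype.sum_prod_type, Fintype.sum_bool, if_true, if_false, Bool.not_true,
          Bool.not_false, ite_true, ite_false]
        norm_num [hp0, hp1, hp2, hq0, hq1, hq2, Matrix.cons_val_zero, Matrix.cons_val_one,
          Matrix.head_cons, Matrix.cons_val_succ]
        try ring)
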